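/- arXiv:1602.03575 — 2 statements merged into one kernel-verified Lean document; each statement's English description precedes it below -/
import Mathlib

section
/- Let F ≤ S_d and let l be a legal labelling of the d-regular tree T_d (d ≥ 3). Then: (i) U^{(l)}(F) is a closed subgroup of Aut(T_d) in the topology of pointwise convergence on vertices; (ii) U^{(l)}(F) is locally permutation isomorphic to F, i.e., for every vertex b the stabilizer of b in U^{(l)}(F) induces on E(b) exactly the permutations l_b^{-1} ∘ a ∘ l_b for a ∈ F; (iii) U^{(l)}(F) acts transitively on the vertices of T_d. -/
/-!
STATEMENT 9.  For F ≤ S_d and a legal labelling l of the d-regular tree T_d (d ≥ 3):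
(i) U^{(l)}(F) is a closed subgroup of Aut(T_d) in the topology of pointwise convergence
on vertices; (ii) U^{(l)}(F) is locally permutation isomorphic to F; (iii) U^{(l)}(F) acts
transitively on vertices.
-/

def IsTreeAut {V : Type*} (T : SimpleGraph V) (g : Equiv.Perm V) : Prop :=
  ∀ u v : V, T.Adj (g u) (g v) ↔ T.Adj u v

structure LegalLabelling {V : Type*} (T : SimpleGraph V) (d : ℕ) where
  label : V → V → Fin d
  symm : ∀ u v : V, T.Adj u v → label u v = label v u
  inj : ∀ ⦃x u w : V⦄, T.Adj x u → T.Adj x w → label x u = label x w → u = w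
  surj : ∀ (x : V) (i : Fin d), ∃ w : V, T.Adj x w ∧ label x w = i

/-- Membership in the Burger–Mozes universal group U^{(l)}(F). -/
def InU {V : Type*} {d : ℕ} (T : SimpleGraph V) (l : LegalLabelling T d)
    (F : Subgroup (Equiv.Perm (Fin d))) (g : Equiv.Perm V) : Prop :=
  IsTreeAut T g ∧
    ∀ x : V, ∃ a ∈ F, ∀ w : V, T.Adj x w → l.label (g x) (g w) = a (l.label x w)

/-- The topology of pointwise convergence on vertices (vertices being discrete). -/
def permTop (V : Type*) : TopologicalSpace (Equiv.Perm V) :=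
  TopologicalSpace.induced (fun g : Equiv.Perm V => (g : V → V))
    (@Pi.topologicalSpace V (fun _ => V) (fun _ => ⊥))

section Aux

variable {V : Type*} {d : ℕ} {T : SimpleGraph V} (l : LegalLabelling T d)

noncomputable def lstep (x : V) (i : Fin d) : V := (l.surj x i).choose

lemma lstep_adj (x : V) (i : Fin d) : T.Adj x (lstep l x i) := (l.surj x i).choose_spec.1
lemma lstep_label (x : V) (i : Fin d) : l.label x (lstep l x i) = i := (l.surj x i).choose_spec.2

lemma lstep_eq {x w : V} {i : Fin d} (h : T.Adj x w) (hl : l.label x w = i) :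
    lstep l x i = w :=
  l.inj (lstep_adj l x i) h (by rw [lstep_label, hl])

lemma lstep_lstep (x : V) (i : Fin d) : lstep l (lstep l x i) i = x :=
  lstep_eq l (lstep_adj l x i).symm
    (by rw [← l.symm _ _ (lstep_adj l x i), lstep_label])

noncomputable def lfollow (x : V) : List (Fin d) → V
  | [] => x
  | i :: L => lfollow (lstep l x i) L

@[simp] lemma lfollow_nil (x : V) : lfollow l x [] = x := rfl
@[simp] lemma lfollow_cons (x : V) (i : Fin d) (L : List (Fin d)) :
    lfollow l x (i :: L) = lfollow l (lstep l x i) L := rfl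

lemma lfollow_append (x : V) (L₁ L₂ : List (Fin d)) :
    lfollow l x (L₁ ++ L₂) = lfollow l (lfollow l x L₁) L₂ := by
  induction L₁ generalizing x with
  | nil => rfl
  | cons i L ih => simp [ih]

def wlabels {u v : V} (p : T.Walk u v) : List (Fin d) :=
  p.darts.map (fun e => l.label e.toProd.1 e.toProd.2)

@[simp] lemma wlabels_nil (u : V) : wlabels l (SimpleGraph.Walk.nil : T.Walk u u) = [] := rfl
@[simp] lemma wlabels_cons {u w v : V} (h : T.Adj u w) (p : T.Walk w v) :
    wlabels l (SimpleGraph.Walk.cons h p) = l.label u w :: wlabels l p := rfl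

lemma wlabels_append {u v w : V} (p : T.Walk u v) (q : T.Walk v w) :
    wlabels l (p.append q) = wlabels l p ++ wlabels l q := by
  simp [wlabels, SimpleGraph.Walk.darts_append]

lemma wlabels_concat {u v w : V} (p : T.Walk u v) (h : T.Adj v w) :
    wlabels l (p.concat h) = wlabels l p ++ [l.label v w] := by
  rw [SimpleGraph.Walk.concat, wlabels_append]; rfl

end Aux

section Tree

variable {V : Type*} [DecidableEq V] {d : ℕ} {T : SimpleGraph V} (hT : T.IsTree) (l : LegalLabelling T d)

/-- the unique path between two vertices -/
noncomputable def pth (u v : V) : T.Walk u v :=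
  (Classical.choice (hT.isConnected.preconnected u v)).toPath

lemma pth_isPath (u v : V) : (pth hT u v).IsPath :=
  (Classical.choice (hT.isConnected.preconnected u v)).toPath.2

lemma pth_unique {u v : V} (p : T.Walk u v) (hp : p.IsPath) : pth hT u v = p := by
  have := hT.IsAcyclic.path_unique ⟨pth hT u v, pth_isPath hT u v⟩ ⟨p, hp⟩
  exact congrArg Subtype.val this

@[simp] lemma pth_self (u : V) : pth hT u u = SimpleGraph.Walk.nil :=
  pth_unique hT _ SimpleGraph.Walk.IsPath.nil

noncomputable def ltrans (b b' : V) (a : Equiv.Perm (Fin d)) (v : V) : V :=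
  lfollow l b' ((wlabels l (pth hT b v)).map a)

@[simp] lemma ltrans_base (b b' : V) (a : Equiv.Perm (Fin d)) :
    ltrans hT l b b' a b = b' := by
  simp [ltrans]

lemma ltrans_adj {b b' : V} {a : Equiv.Perm (Fin d)} {v w : V} (hvw : T.Adj v w) :
    ltrans hT l b b' a w = lstep l (ltrans hT l b b' a v) (a (l.label v w)) := by
  by_cases hmem : w ∈ (pth hT b v).support
  · -- pth b v = pth b w ++ single edge w v
    have hsplit := (pth hT b v).take_spec hmem
    have htake : (pth hT b v).takeUntil w hmem = pth hT b w :=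
      ((pth_unique hT _ ((pth_isPath hT b v).takeUntil hmem))).symm
    have hdrop : (pth hT b v).dropUntil w hmem = SimpleGraph.Walk.cons hvw.symm SimpleGraph.Walk.nil := by
      have h1 : ((pth hT b v).dropUntil w hmem).IsPath := (pth_isPath hT b v).dropUntil hmem
      have h2 : (SimpleGraph.Walk.cons hvw.symm (SimpleGraph.Walk.nil : T.Walk v v)).IsPath := by
        simp [SimpleGraph.Walk.cons_isPath_iff, hvw.ne']
      have := hT.IsAcyclic.path_unique ⟨_, h1⟩ ⟨_, h2⟩
      exact congrArg Subtype.val this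
    have hlab : wlabels l (pth hT b v) = wlabels l (pth hT b w) ++ [l.label w v] := by
      conv_lhs => rw [← hsplit]
      rw [wlabels_append, htake, hdrop]; rfl
    have : ltrans hT l b b' a v = lstep l (ltrans hT l b b' a w) (a (l.label w v)) := by
      rw [ltrans, hlab, List.map_append, lfollow_append]
      rfl
    rw [this, ← l.symm _ _ hvw, lstep_lstep]
  · have hpath : ((pth hT b v).concat hvw).IsPath := by
      rw [← SimpleGraph.Walk.isPath_reverse_iff, SimpleGraph.Walk.reverse_concat,
        SimpleGraph.Walk.cons_isPath_iff]
      refine ⟨(pth_isPath hT b v).reverse, ?_⟩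
      rw [SimpleGraph.Walk.support_reverse, List.mem_reverse]
      exact hmem
    have : pth hT b w = (pth hT b v).concat hvw := pth_unique hT _ hpath
    rw [ltrans, this, wlabels_concat, List.map_append, lfollow_append]
    rfl

lemma ltrans_ltrans {b b' : V} {a : Equiv.Perm (Fin d)} (v : V) :
    ltrans hT l b' b a⁻¹ (ltrans hT l b b' a v) = v := by
  have key : ∀ {u c : V} (_ : T.Walk u c),
      ltrans hT l b' b a⁻¹ (ltrans hT l b b' a c) = c →
      ltrans hT l b' b a⁻¹ (ltrans hT l b b' a u) = u := by
    intro u c p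
    induction p with
    | nil => exact id
    | @cons u x _ h q ih =>
      intro hc
      have hx := ih hc
      have hxu : T.Adj x u := h.symm
      have h1 : ltrans hT l b b' a u = lstep l (ltrans hT l b b' a x) (a (l.label x u)) :=
        ltrans_adj hT l hxu
      have hadj : T.Adj (ltrans hT l b b' a x) (ltrans hT l b b' a u) := by
        rw [h1]; exact lstep_adj l _ _
      have hlab : l.label (ltrans hT l b b' a x) (ltrans hT l b b' a u) = a (l.label x u) := by
        rw [h1]; exact lstep_label l _ _
      rw [ltrans_adj hT l hadj, hx, hlab, (show ∀ (σ : Equiv.Perm (Fin d)) (x : Fin d), σ⁻¹ (σ x) = x from fun σ x => σ.symm_apply_apply x)]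
      exact lstep_eq l hxu rfl
  obtain ⟨p⟩ := hT.isConnected.preconnected v b
  exact key p (by simp)

noncomputable def ltransPerm (b b' : V) (a : Equiv.Perm (Fin d)) : Equiv.Perm V where
  toFun := ltrans hT l b b' a
  invFun := ltrans hT l b' b a⁻¹
  left_inv := ltrans_ltrans hT l
  right_inv := fun u => by
    have := ltrans_ltrans hT l (b := b') (b' := b) (a := a⁻¹) u
    rwa [inv_inv] at this

lemma ltransPerm_apply (b b' : V) (a : Equiv.Perm (Fin d)) (v : V) :
    ltransPerm hT l b b' a v = ltrans hT l b b' a v := rfl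

lemma ltransPerm_label {b b' : V} {a : Equiv.Perm (Fin d)} {v w : V} (hvw : T.Adj v w) :
    T.Adj (ltransPerm hT l b b' a v) (ltransPerm hT l b b' a w) ∧
    l.label (ltransPerm hT l b b' a v) (ltransPerm hT l b b' a w) = a (l.label v w) := by
  constructor
  · rw [ltransPerm_apply, ltransPerm_apply, ltrans_adj hT l hvw]; exact lstep_adj l _ _
  · rw [ltransPerm_apply, ltransPerm_apply, ltrans_adj hT l hvw]; exact lstep_label l _ _

lemma ltransPerm_isTreeAut (b b' : V) (a : Equiv.Perm (Fin d)) :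
    IsTreeAut T (ltransPerm hT l b b' a) := by
  intro u v
  constructor
  · intro h
    have h2 := (ltransPerm_label hT l (b := b') (b' := b) (a := a⁻¹) h).1
    simpa [ltransPerm_apply, ltrans_ltrans hT l] using h2
  · intro h
    exact (ltransPerm_label hT l h).1

lemma ltransPerm_mem {F : Subgroup (Equiv.Perm (Fin d))} (b b' : V) {a : Equiv.Perm (Fin d)}
    (ha : a ∈ F) : InU T l F (ltransPerm hT l b b' a) := by
  refine ⟨ltransPerm_isTreeAut hT l b b' a, fun x => ⟨a, ha, fun w hw => ?_⟩⟩
  exact (ltransPerm_label hT l hw).2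

end Tree

section Closed

variable {V : Type*}

lemma permTop_closed (S : Set (Equiv.Perm V))
    (h : ∀ g : Equiv.Perm V, g ∉ S → ∃ t : Set V, t.Finite ∧
      ∀ h' : Equiv.Perm V, (∀ v ∈ t, h' v = g v) → h' ∉ S) :
    @IsClosed (Equiv.Perm V) (permTop V) S := by
  letI : TopologicalSpace V := ⊥
  haveI : DiscreteTopology V := ⟨rfl⟩
  letI : TopologicalSpace (Equiv.Perm V) := permTop V
  rw [← isOpen_compl_iff, isOpen_iff_forall_mem_open]
  intro g hg
  obtain ⟨t, ht, hdet⟩ := h g hg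
  refine ⟨(fun g : Equiv.Perm V => (g : V → V)) ⁻¹' (t.pi fun v => {g v}), ?_, ?_, ?_⟩
  · intro h' hh'
    exact hdet h' (fun v hv => hh' v hv)
  · exact (isOpen_set_pi ht fun v _ => isOpen_discrete _).preimage continuous_induced_dom
  · intro v hv
    rfl

lemma nbrs_finite {d : ℕ} {T : SimpleGraph V} (l : LegalLabelling T d) (x : V) :
    {w : V | T.Adj x w}.Finite := by
  refine Set.Finite.of_finite_image (f := l.label x) (Set.toFinite _) ?_
  intro u hu w hw huw
  exact l.inj hu hw huw

end Closed


noncomputable def Usub {V : Type*} {d : ℕ} (T : SimpleGraph V) (l : LegalLabelling T d)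
    (F : Subgroup (Equiv.Perm (Fin d))) : Subgroup (Equiv.Perm V) where
  carrier := {g : Equiv.Perm V | InU T l F g}
  one_mem' := ⟨fun u v => Iff.rfl, fun x => ⟨1, F.one_mem, fun w _ => rfl⟩⟩
  mul_mem' := by
    rintro g h ⟨hgT, hgL⟩ ⟨hhT, hhL⟩
    refine ⟨fun u v => by rw [Equiv.Perm.mul_apply, Equiv.Perm.mul_apply, hgT, hhT], fun x => ?_⟩
    obtain ⟨ah, hah, hah2⟩ := hhL x
    obtain ⟨ag, hag, hag2⟩ := hgL (h x)
    refine ⟨ag * ah, F.mul_mem hag hah, fun w hw => ?_⟩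
    rw [Equiv.Perm.mul_apply, Equiv.Perm.mul_apply, Equiv.Perm.mul_apply,
      hag2 _ ((hhT x w).mpr hw), hah2 _ hw]
  inv_mem' := by
    rintro g ⟨hgT, hgL⟩
    have hginvT : IsTreeAut T g⁻¹ := fun u v => by
      conv_rhs => rw [← (show g (g⁻¹ u) = u from g.apply_symm_apply u), ← (show g (g⁻¹ v) = v from g.apply_symm_apply v)]
      rw [hgT]
    refine ⟨hginvT, fun x => ?_⟩
    obtain ⟨a, ha, ha2⟩ := hgL (g⁻¹ x)
    refine ⟨a⁻¹, F.inv_mem ha, fun w hw => ?_⟩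
    have hw' : T.Adj (g⁻¹ x) (g⁻¹ w) := (hginvT x w).mpr hw
    have h2 := ha2 _ hw'
    rw [(show g (g⁻¹ x) = x from g.apply_symm_apply x), (show g (g⁻¹ w) = w from g.apply_symm_apply w)] at h2
    rw [h2]
    simp


theorem universal_group_basic_properties {V : Type*} (T : SimpleGraph V)
    (hT : T.IsTree) (d : ℕ) (hd : 3 ≤ d) (l : LegalLabelling T d)
    (F : Subgroup (Equiv.Perm (Fin d))) :
    -- (i) U^{(l)}(F) is closed (it is a subgroup by `Usub` elsewhere)
    (@IsClosed (Equiv.Perm V) (permTop V) {g : Equiv.Perm V | InU T l F g} ∧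
      ∃ H : Subgroup (Equiv.Perm V),
        (H : Set (Equiv.Perm V)) = {g : Equiv.Perm V | InU T l F g}) ∧
    -- (ii) locally permutation isomorphic to F: at every vertex b, the stabilizer of b
    -- induces on E(b) exactly the permutations l_b⁻¹ ∘ a ∘ l_b, a ∈ F
    (∀ b : V,
      (∀ a ∈ F, ∃ g : Equiv.Perm V, InU T l F g ∧ g b = b ∧
        ∀ w : V, T.Adj b w → l.label b (g w) = a (l.label b w)) ∧
      (∀ g : Equiv.Perm V, InU T l F g → g b = b →
        ∃ a ∈ F, ∀ w : V, T.Adj b w → l.label b (g w) = a (l.label b w))) ∧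
    -- (iii) vertex-transitivity
    (∀ b b' : V, ∃ g : Equiv.Perm V, InU T l F g ∧ g b = b') := by
  classical
  refine ⟨⟨?_, ?_⟩, ?_, ?_⟩
  · -- closedness
    apply permTop_closed
    intro g hg
    rw [Set.mem_setOf_eq, InU, not_and_or] at hg
    rcases hg with hg | hg
    · rw [IsTreeAut] at hg
      push_neg at hg
      obtain ⟨u, v, huv⟩ := hg
      refine ⟨{u, v}, (Set.finite_singleton v).insert u, ?_⟩
      rintro h' hagree ⟨h'T, _⟩
      have e1 : h' u = g u := hagree u (by simp)
      have e2 : h' v = g v := hagree v (by simp)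
      have hiff := h'T u v
      rw [e1, e2] at hiff
      rcases huv with ⟨h1, h2⟩ | ⟨h1, h2⟩
      · exact h2 (hiff.mp h1)
      · exact h1 (hiff.mpr h2)
    · push_neg at hg
      obtain ⟨x, hx⟩ := hg
      refine ⟨insert x {w : V | T.Adj x w}, (nbrs_finite l x).insert x, ?_⟩
      rintro h' hagree ⟨h'T, h'L⟩
      obtain ⟨a, ha, ha2⟩ := h'L x
      obtain ⟨w, hw, hne⟩ := hx a ha
      refine hne ?_
      have e1 : h' x = g x := hagree x (Set.mem_insert _ _)
      have e2 : h' w = g w := hagree w (Set.mem_insert_of_mem _ hw)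
      rw [← e1, ← e2]
      exact ha2 w hw
  · exact ⟨Usub T l F, rfl⟩
  · -- local
    intro b
    constructor
    · intro a ha
      refine ⟨ltransPerm hT l b b a, ltransPerm_mem hT l b b ha, by simp [ltransPerm_apply], ?_⟩
      intro w hw
      have h1 := (ltransPerm_label hT l (b := b) (b' := b) (a := a) hw).2
      have hb : ltransPerm hT l b b a b = b := by simp [ltransPerm_apply]
      rwa [hb] at h1
    · intro g hg hgb
      obtain ⟨a, ha, ha2⟩ := hg.2 b
      exact ⟨a, ha, fun w hw => by have h2 := ha2 w hw; rwa [hgb] at h2⟩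
  · -- transitive
    intro b b'
    exact ⟨ltransPerm hT l b b' 1, ltransPerm_mem hT l b b' F.one_mem,
      by simp [ltransPerm_apply]⟩
end

section
/- Let F ≤ S_d and let l be a legal labelling of the d-regular tree T_d (d ≥ 3). Then U^{(l)}(F) is a discrete subgroup of Aut(T_d) (in the topology of pointwise convergence on vertices) if and only if the action of F on {1,…,d} is free, i.e., only the identity of F fixes a point of {1,…,d}. -/
theorem Equiv.Perm.apply_inv_self {α : Type*} (f : Equiv.Perm α) (x : α) : f (f⁻¹ x) = x :=
  f.apply_symm_apply x

theorem Equiv.Perm.inv_apply_self {α : Type*} (f : Equiv.Perm α) (x : α) : f⁻¹ (f x) = x :=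
  f.symm_apply_apply x

namespace BMAux
open SimpleGraph Walk List

variable {V : Type*} {T : SimpleGraph V} {d : ℕ}

noncomputable def nbr (l : LegalLabelling T d) (v : V) (c : Fin d) : V :=
  (l.surj v c).choose

lemma adj_nbr (l : LegalLabelling T d) (v : V) (c : Fin d) : T.Adj v (nbr l v c) :=
  (l.surj v c).choose_spec.1

lemma label_nbr (l : LegalLabelling T d) (v : V) (c : Fin d) : l.label v (nbr l v c) = c :=
  (l.surj v c).choose_spec.2

lemma eq_nbr (l : LegalLabelling T d) {v w : V} {c : Fin d} (h : T.Adj v w)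
    (hc : l.label v w = c) : w = nbr l v c :=
  l.inj h (adj_nbr l v c) (hc.trans (label_nbr l v c).symm)

noncomputable def follow (l : LegalLabelling T d) (v : V) (w : List (Fin d)) : V :=
  w.foldl (nbr l) v

@[simp] lemma follow_nil (l : LegalLabelling T d) (v : V) : follow l v [] = v := rfl

@[simp] lemma follow_cons (l : LegalLabelling T d) (v : V) (c : Fin d) (w : List (Fin d)) :
    follow l v (c :: w) = follow l (nbr l v c) w := rfl

lemma follow_append (l : LegalLabelling T d) (v : V) (w1 w2 : List (Fin d)) :
    follow l v (w1 ++ w2) = follow l (follow l v w1) w2 :=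
  List.foldl_append ..

@[simp] lemma follow_concat (l : LegalLabelling T d) (v : V) (w : List (Fin d)) (c : Fin d) :
    follow l v (w ++ [c]) = nbr l (follow l v w) c := by
  rw [follow_append]; rfl

noncomputable def walkLabels (l : LegalLabelling T d) : {u v : V} → T.Walk u v → List (Fin d)
  | _, _, .nil => []
  | u, _, .cons (v := b) _ p => l.label u b :: walkLabels l p

@[simp] lemma walkLabels_nil (l : LegalLabelling T d) {u : V} :
    walkLabels l (Walk.nil : T.Walk u u) = [] := rfl

@[simp] lemma walkLabels_cons (l : LegalLabelling T d) {u b v : V} (h : T.Adj u b)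
    (p : T.Walk b v) : walkLabels l (Walk.cons h p) = l.label u b :: walkLabels l p := rfl

lemma follow_walkLabels (l : LegalLabelling T d) {u v : V} (p : T.Walk u v) :
    follow l u (walkLabels l p) = v := by
  induction p with
  | nil => rfl
  | cons h p ih =>
    rw [walkLabels_cons, follow_cons, ← eq_nbr l h rfl]
    exact ih

lemma walkLabels_append (l : LegalLabelling T d) {u v w : V} (p : T.Walk u v)
    (q : T.Walk v w) : walkLabels l (p.append q) = walkLabels l p ++ walkLabels l q := by
  induction p with
  | nil => rfl
  | cons h p ih => simp [Walk.cons_append, walkLabels_cons, ih]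

lemma walkLabels_concat (l : LegalLabelling T d) {u v w : V} (p : T.Walk u v)
    (h : T.Adj v w) : walkLabels l (p.concat h) = walkLabels l p ++ [l.label v w] := by
  rw [Walk.concat_eq_append, walkLabels_append]; rfl

lemma chain'_walkLabels (l : LegalLabelling T d) {u v : V} (p : T.Walk u v) :
    p.IsPath → (walkLabels l p).Chain' (· ≠ ·) := by
  induction p with
  | nil => simp [List.Chain']
  | @cons x b z h' p ih =>
    intro hp
    rw [walkLabels_cons]; show List.IsChain _ _; rw [List.isChain_cons]
    refine ⟨?_, ih hp.of_cons⟩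
    intro c hc
    cases p with
    | nil => simp at hc
    | @cons b' b2 z2 h2 q =>
      rw [walkLabels_cons, List.head?_cons, Option.mem_some_iff] at hc
      subst hc
      intro hlab
      have hxb : x = b2 := by
        apply l.inj h'.symm h2
        rw [← l.symm _ _ h']
        exact hlab
      have hns : x ∉ (Walk.cons h2 q).support := by
        have := hp.support_nodup
        simp only [Walk.support_cons, List.nodup_cons] at this
        exact this.1
      exact hns (by rw [hxb]; simp [Walk.support_cons, Walk.start_mem_support])

lemma concat_isPath {u v w : V} {p : T.Walk u v} (hp : p.IsPath) (h : T.Adj v w)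
    (hw : w ∉ p.support) : (p.concat h).IsPath := by
  rw [← Walk.isPath_reverse_iff, Walk.reverse_concat]
  exact Walk.IsPath.cons hp.reverse (by simpa [Walk.support_reverse] using hw)


section Tree

noncomputable def pathTo (hT : T.IsTree) (u v : V) : T.Walk u v :=
  letI := Classical.decEq V
  (hT.isConnected.preconnected u v).some.bypass

lemma pathTo_isPath (hT : T.IsTree) (u v : V) : (pathTo hT u v).IsPath := by
  letI := Classical.decEq V
  exact Walk.bypass_isPath _

lemma path_eq (hT : T.IsTree) {u v : V} {p : T.Walk u v} (hp : p.IsPath) :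
    p = pathTo hT u v := by
  have := hT.IsAcyclic.path_unique ⟨p, hp⟩ ⟨pathTo hT u v, pathTo_isPath hT u v⟩
  exact congrArg Subtype.val this

noncomputable def wordOf (l : LegalLabelling T d) (hT : T.IsTree) (r v : V) : List (Fin d) :=
  walkLabels l (pathTo hT r v)


lemma follow_wordOf (l : LegalLabelling T d) (hT : T.IsTree) (r : V) (v : V) : follow l r (wordOf l hT r v) = v :=
  follow_walkLabels l _

lemma chain'_wordOf (l : LegalLabelling T d) (hT : T.IsTree) (r : V) (v : V) : (wordOf l hT r v).Chain' (· ≠ ·) :=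
  chain'_walkLabels l _ (pathTo_isPath hT r v)

lemma wordOf_self (l : LegalLabelling T d) (hT : T.IsTree) (r : V) : wordOf l hT r r = [] := by
  have : pathTo hT r r = Walk.nil := by
    rw [← Walk.isPath_iff_eq_nil]; exact pathTo_isPath hT r r
  rw [wordOf, this, walkLabels_nil]

lemma exists_path (l : LegalLabelling T d) (hT : T.IsTree) (r : V) (w : List (Fin d)) (hw : w.Chain' (· ≠ ·)) :
    ∃ (v : V) (p : T.Walk r v), p.IsPath ∧ walkLabels l p = w := by
  classical
  induction w using List.reverseRecOn with
  | nil => exact ⟨r, Walk.nil, Walk.IsPath.nil, rfl⟩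
  | append_singleton w c ih =>
    obtain ⟨hw1, _, hjunc⟩ := List.isChain_append.1 hw
    obtain ⟨x, p, hp, hlab⟩ := ih hw1
    set y := nbr l x c with hy
    have hadj : T.Adj x y := adj_nbr l x c
    have hysup : y ∉ p.support := by
      intro hmem
      have hyx : y ≠ x := hadj.ne'
      have hq : (p.dropUntil y hmem).IsPath := hp.dropUntil hmem
      have hq' : (Walk.cons hadj.symm Walk.nil : T.Walk y x).IsPath :=
        Walk.IsPath.cons Walk.IsPath.nil (by simpa using hyx)
      have heq : p.dropUntil y hmem = Walk.cons hadj.symm Walk.nil :=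
        (path_eq hT hq).trans (path_eq hT hq').symm
      have hsplit : walkLabels l p
          = walkLabels l (p.takeUntil y hmem) ++ [l.label y x] := by
        conv_lhs => rw [← Walk.take_spec p hmem]
        rw [walkLabels_append, heq]
        rfl
      have hlast : w.getLast? = some (l.label y x) := by
        rw [← hlab, hsplit, List.getLast?_concat]
      have hne : l.label y x ≠ c :=
        hjunc _ hlast c (by simp)
      apply hne
      rw [l.symm _ _ hadj.symm]
      exact label_nbr l x c
    refine ⟨y, p.concat hadj, concat_isPath hp hadj hysup, ?_⟩
    rw [walkLabels_concat, hlab, label_nbr]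

lemma wordOf_follow (l : LegalLabelling T d) (hT : T.IsTree) (r : V) {w : List (Fin d)} (hw : w.Chain' (· ≠ ·)) :
    wordOf l hT r (follow l r w) = w := by
  obtain ⟨v, p, hp, hlab⟩ := exists_path l hT r w hw
  have hv : follow l r w = v := by rw [← hlab]; exact follow_walkLabels l p
  rw [hv, wordOf, ← path_eq hT hp, hlab]

lemma follow_inj (l : LegalLabelling T d) (hT : T.IsTree) (r : V) {w1 w2 : List (Fin d)} (h1 : w1.Chain' (· ≠ ·))
    (h2 : w2.Chain' (· ≠ ·)) (h : follow l r w1 = follow l r w2) : w1 = w2 := by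
  rw [← wordOf_follow l hT r h1, ← wordOf_follow l hT r h2, h]

lemma adj_of_word (l : LegalLabelling T d) (hT : T.IsTree) (r : V) {u v : V} {c : Fin d}
    (h : wordOf l hT r v = wordOf l hT r u ++ [c]) :
    T.Adj u v ∧ l.label u v = c := by
  have hv : v = nbr l u c := by
    have h2 := follow_wordOf l hT r v
    rw [h, follow_concat, follow_wordOf] at h2
    exact h2.symm
  subst hv
  exact ⟨adj_nbr l u c, label_nbr l u c⟩

lemma word_of_adj (l : LegalLabelling T d) (hT : T.IsTree) (r : V) {u v : V} (h : T.Adj u v) :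
    wordOf l hT r v = wordOf l hT r u ++ [l.label u v] ∨
      wordOf l hT r u = wordOf l hT r v ++ [l.label v u] := by
  classical
  set p := pathTo hT r u with hpdef
  have hp : p.IsPath := pathTo_isPath hT r u
  by_cases hv : v ∈ p.support
  · right
    have hq : (p.dropUntil v hv).IsPath := hp.dropUntil hv
    have hq' : (Walk.cons h.symm Walk.nil : T.Walk v u).IsPath :=
      Walk.IsPath.cons Walk.IsPath.nil (by simpa using h.ne')
    have heq : p.dropUntil v hv = Walk.cons h.symm Walk.nil :=
      (path_eq hT hq).trans (path_eq hT hq').symm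
    have htake : p.takeUntil v hv = pathTo hT r v := path_eq hT (hp.takeUntil hv)
    have hsplit : walkLabels l p
        = walkLabels l (p.takeUntil v hv) ++ [l.label v u] := by
      conv_lhs => rw [← Walk.take_spec p hv]
      rw [walkLabels_append, heq]
      rfl
    rw [wordOf, wordOf, ← hpdef, hsplit, htake]
  · left
    have hc : (p.concat h).IsPath := concat_isPath hp h hv
    have : pathTo hT r v = p.concat h := (path_eq hT hc).symm
    rw [wordOf, wordOf, ← hpdef, this, walkLabels_concat]

end Tree

section Group

variable {F : Subgroup (Equiv.Perm (Fin d))}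

lemma InU_one (l : LegalLabelling T d) (F : Subgroup (Equiv.Perm (Fin d))) :
    InU T l F 1 := by
  refine ⟨fun u v => by simp, fun x => ⟨1, F.one_mem, fun w hw => by simp⟩⟩

lemma InU_mul (l : LegalLabelling T d) {g h : Equiv.Perm V} (hg : InU T l F g)
    (hh : InU T l F h) : InU T l F (g * h) := by
  constructor
  · intro u v
    rw [Equiv.Perm.mul_apply, Equiv.Perm.mul_apply, hg.1, hh.1]
  · intro x
    obtain ⟨b, hbF, hb⟩ := hh.2 x
    obtain ⟨a, haF, ha⟩ := hg.2 (h x)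
    refine ⟨a * b, F.mul_mem haF hbF, fun w hw => ?_⟩
    have hadj : T.Adj (h x) (h w) := (hh.1 x w).mpr hw
    rw [Equiv.Perm.mul_apply, Equiv.Perm.mul_apply, Equiv.Perm.mul_apply,
      ha (h w) hadj, hb w hw]

lemma InU_inv (l : LegalLabelling T d) {g : Equiv.Perm V} (hg : InU T l F g) :
    InU T l F g⁻¹ := by
  have haut : IsTreeAut T g⁻¹ := by
    intro u v
    conv_rhs => rw [← Equiv.Perm.apply_inv_self g u, ← Equiv.Perm.apply_inv_self g v]
    rw [hg.1]
  refine ⟨haut, fun x => ?_⟩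
  obtain ⟨a, haF, ha⟩ := hg.2 (g⁻¹ x)
  refine ⟨a⁻¹, F.inv_mem haF, fun w hw => ?_⟩
  have hadj : T.Adj (g⁻¹ x) (g⁻¹ w) := (haut x w).mpr hw
  have := ha (g⁻¹ w) hadj
  rw [Equiv.Perm.apply_inv_self, Equiv.Perm.apply_inv_self] at this
  rw [this, Equiv.Perm.inv_apply_self]

lemma fix_nbrs (l : LegalLabelling T d)
    (hfree : ∀ a ∈ F, ∀ i : Fin d, a i = i → a = 1) {g : Equiv.Perm V}
    (hg : InU T l F g) {u p : V} (hadj : T.Adj u p) (hu : g u = u) (hp : g p = p) :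
    ∀ w : V, T.Adj u w → g w = w := by
  obtain ⟨a, haF, ha⟩ := hg.2 u
  have h1 : a (l.label u p) = l.label u p := by
    have := ha p hadj
    rw [hu, hp] at this
    exact this.symm
  have ha1 : a = 1 := hfree a haF _ h1
  intro w hw
  have h2 : l.label u (g w) = l.label u w := by
    have := ha w hw
    rw [hu, ha1] at this
    simpa using this
  have hadj2 : T.Adj u (g w) := by
    have := (hg.1 u w).mpr hw
    rwa [hu] at this
  exact l.inj hadj2 hw h2

lemma rigid (l : LegalLabelling T d) (hT : T.IsTree) (r : V)
    (hfree : ∀ a ∈ F, ∀ i : Fin d, a i = i → a = 1) {g : Equiv.Perm V}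
    (hg : InU T l F g) {c0 : Fin d} (h0 : g r = r) (h1 : g (nbr l r c0) = nbr l r c0) :
    ∀ v : V, g v = v := by
  have key : ∀ (n : ℕ) (w : List (Fin d)), w.length ≤ n → w.Chain' (· ≠ ·) →
      g (follow l r w) = follow l r w := by
    intro n
    induction n with
    | zero =>
      intro w hw _
      rw [List.length_eq_zero_iff.mp (Nat.le_zero.mp hw)]
      exact h0
    | succ n ih =>
      intro w hlen hw
      rcases List.eq_nil_or_concat w with rfl | ⟨w', c, rfl⟩
      · exact h0
      rw [List.concat_eq_append] at *
      obtain ⟨hw', _, _⟩ := List.isChain_append.1 hw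
      have hlen' : w'.length ≤ n := by
        rw [List.length_append] at hlen
        simpa using Nat.le_of_succ_le_succ (by simpa using hlen)
      have hu : g (follow l r w') = follow l r w' := ih w' hlen' hw'
      have hadjv : T.Adj (follow l r w') (follow l r (w' ++ [c])) := by
        rw [follow_concat]
        exact adj_nbr l _ c
      rcases List.eq_nil_or_concat w' with rfl | ⟨w'', c', rfl⟩
      · exact fix_nbrs l hfree hg (adj_nbr l r c0) h0 h1 _ hadjv
      · rw [List.concat_eq_append] at *
        obtain ⟨hw'', _, _⟩ := List.isChain_append.1 hw'
        have hlen'' : w''.length ≤ n := by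
          rw [List.length_append] at hlen'
          exact le_trans (Nat.le_add_right _ _) hlen'
        have hp : g (follow l r w'') = follow l r w'' := ih w'' hlen'' hw''
        have hadjp : T.Adj (follow l r (w'' ++ [c'])) (follow l r w'') := by
          rw [follow_concat]
          exact (adj_nbr l _ c').symm
        exact fix_nbrs l hfree hg hadjp hu hp _ hadjv
  intro v
  have := key (wordOf l hT r v).length (wordOf l hT r v) le_rfl (chain'_wordOf l hT r v)
  rwa [follow_wordOf] at this

end Group

section Move

variable {i : Fin d} {W0 : List (Fin d)} {b : Equiv.Perm (Fin d)}

/-- The word transformation defining the non-trivial element. -/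
def M (W0 : List (Fin d)) (b : Equiv.Perm (Fin d)) (w : List (Fin d)) : List (Fin d) :=
  if W0 <+: w then W0 ++ (w.drop W0.length).map b else w

lemma M_of_prefix {w : List (Fin d)} (h : W0 <+: w) (b : Equiv.Perm (Fin d)) :
    M W0 b w = W0 ++ (w.drop W0.length).map b := if_pos h

lemma M_of_not {w : List (Fin d)} (h : ¬ W0 <+: w) (b : Equiv.Perm (Fin d)) :
    M W0 b w = w := if_neg h

lemma M_fix_short {w : List (Fin d)} (hlen : w.length ≤ W0.length)
    (b : Equiv.Perm (Fin d)) : M W0 b w = w := by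
  by_cases h : W0 <+: w
  · have he : W0 = w := h.eq_of_length (le_antisymm h.length_le hlen)
    subst he
    rw [M_of_prefix (List.prefix_refl W0), List.drop_length]
    simp
  · exact M_of_not h b

lemma M_chain' (hW0 : W0.Chain' (· ≠ ·)) (hlast : W0.getLast? = some i)
    (hb : b i = i) {w : List (Fin d)} (hw : w.Chain' (· ≠ ·)) :
    (M W0 b w).Chain' (· ≠ ·) := by
  by_cases h : W0 <+: w
  · obtain ⟨t, rfl⟩ := h
    rw [M_of_prefix (List.prefix_append _ _), List.drop_left]
    obtain ⟨_, hct, hjunc⟩ := List.isChain_append.1 hw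
    refine List.isChain_append.2 ⟨hW0, ?_, ?_⟩
    · exact (List.isChain_map (⇑b)).2 (hct.imp fun x y hxy he => hxy (b.injective he))
    · intro x hx y hy
      rw [hlast, Option.mem_some_iff] at hx
      subst hx
      rw [List.head?_map] at hy
      obtain ⟨y', hy', rfl⟩ := Option.map_eq_some_iff.1 hy
      have : i ≠ y' := hjunc i hlast y' hy'
      intro he
      exact this (b.injective (by rw [hb, he]))
  · rw [M_of_not h]; exact hw

lemma M_inv (w : List (Fin d)) : M W0 b⁻¹ (M W0 b w) = w := by
  by_cases h : W0 <+: w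
  · obtain ⟨t, rfl⟩ := h
    rw [M_of_prefix (List.prefix_append _ _), List.drop_left,
      M_of_prefix (List.prefix_append _ _), List.drop_left, List.map_map]
    have hid : ⇑b⁻¹ ∘ ⇑b = id := by funext x; simp
    rw [hid, List.map_id]
  · rw [M_of_not h, M_of_not h]

lemma prefix_concat_cases {w : List (Fin d)} {c : Fin d} (h : W0 <+: w ++ [c]) :
    W0 <+: w ∨ W0 = w ++ [c] := by
  obtain ⟨s, hs⟩ := h
  rcases List.eq_nil_or_concat s with rfl | ⟨s', c2, rfl⟩
  · right; rw [← hs, List.append_nil]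
  · left
    rw [List.concat_eq_append, ← List.append_assoc] at hs
    have := List.append_inj_left' hs rfl
    exact ⟨s', this⟩

lemma M_concat_of_prefix (hlast : W0.getLast? = some i) (hb : b i = i)
    {w : List (Fin d)} {c : Fin d} (h : W0 <+: w ++ [c]) :
    M W0 b (w ++ [c]) = M W0 b w ++ [b c] := by
  rcases prefix_concat_cases h with hw | hw
  · obtain ⟨t, rfl⟩ := hw
    rw [M_of_prefix h, M_of_prefix (List.prefix_append _ _), List.drop_left,
      List.append_assoc, List.drop_left, List.map_append, List.append_assoc]
    rfl
  · have hci : c = i := by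
      have := hlast
      rw [hw, List.getLast?_concat] at this
      exact Option.some_injective _ this
    have hnw : ¬ W0 <+: w := by
      intro hp
      have := hp.length_le
      rw [hw, List.length_append] at this
      simp at this
    rw [M_of_not hnw, ← hw, M_of_prefix (List.prefix_refl W0), List.drop_length]
    simp [hw, hci, hb]

lemma M_concat_of_not {w : List (Fin d)} {c : Fin d} (h : ¬ W0 <+: w ++ [c])
    (b : Equiv.Perm (Fin d)) :
    M W0 b (w ++ [c]) = M W0 b w ++ [c] ∧ M W0 b w = w := by
  have hnw : ¬ W0 <+: w := fun hp => h (hp.trans (List.prefix_append _ _))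
  rw [M_of_not h, M_of_not hnw]
  exact ⟨rfl, rfl⟩

end Move

section GMove

variable {F : Subgroup (Equiv.Perm (Fin d))}

lemma M_cancel (l : LegalLabelling T d) (hT : T.IsTree) (r : V) {i : Fin d}
    {W0 : List (Fin d)} (hW0 : W0.Chain' (· ≠ ·)) (hlast : W0.getLast? = some i)
    {b : Equiv.Perm (Fin d)} (hb : b i = i) (v : V) :
    follow l r (M W0 b⁻¹ (wordOf l hT r (follow l r (M W0 b (wordOf l hT r v))))) = v := by
  rw [wordOf_follow l hT r (M_chain' hW0 hlast hb (chain'_wordOf l hT r v)),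
    M_inv, follow_wordOf]

/-- The nontrivial element of the universal group. -/
noncomputable def gmove (l : LegalLabelling T d) (hT : T.IsTree) (r : V) {i : Fin d}
    {W0 : List (Fin d)} (hW0 : W0.Chain' (· ≠ ·)) (hlast : W0.getLast? = some i)
    {a : Equiv.Perm (Fin d)} (hai : a i = i) : Equiv.Perm V where
  toFun v := follow l r (M W0 a (wordOf l hT r v))
  invFun v := follow l r (M W0 a⁻¹ (wordOf l hT r v))
  left_inv v := M_cancel l hT r hW0 hlast hai v
  right_inv v := by
    have hinv : a⁻¹ i = i := a.injective (by rw [Equiv.Perm.apply_inv_self, hai])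
    have h := M_cancel l hT r hW0 hlast (b := a⁻¹) hinv v
    rwa [inv_inv] at h

variable (l : LegalLabelling T d) (hT : T.IsTree) (r : V) {i : Fin d}
  {W0 : List (Fin d)}

lemma gmove_apply (hW0 : W0.Chain' (· ≠ ·)) (hlast : W0.getLast? = some i)
    {a : Equiv.Perm (Fin d)} (hai : a i = i) (v : V) :
    gmove l hT r hW0 hlast hai v = follow l r (M W0 a (wordOf l hT r v)) := rfl

lemma wordOf_gmove (hW0 : W0.Chain' (· ≠ ·)) (hlast : W0.getLast? = some i)
    {a : Equiv.Perm (Fin d)} (hai : a i = i) (v : V) :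
    wordOf l hT r (gmove l hT r hW0 hlast hai v) = M W0 a (wordOf l hT r v) :=
  wordOf_follow l hT r (M_chain' hW0 hlast hai (chain'_wordOf l hT r v))

lemma gmove_fix (hW0 : W0.Chain' (· ≠ ·)) (hlast : W0.getLast? = some i)
    {a : Equiv.Perm (Fin d)} (hai : a i = i) {v : V}
    (hlen : (wordOf l hT r v).length ≤ W0.length) :
    gmove l hT r hW0 hlast hai v = v := by
  rw [gmove_apply, M_fix_short hlen, follow_wordOf]

lemma gmove_fix_not (hW0 : W0.Chain' (· ≠ ·)) (hlast : W0.getLast? = some i)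
    {a : Equiv.Perm (Fin d)} (hai : a i = i) {v : V}
    (hnp : ¬ W0 <+: wordOf l hT r v) :
    gmove l hT r hW0 hlast hai v = v := by
  rw [gmove_apply, M_of_not hnp, follow_wordOf]

lemma adj_follow_M (hlast : W0.getLast? = some i) {b : Equiv.Perm (Fin d)}
    (hb : b i = i) {u v : V} {c : Fin d}
    (hW0 : W0.Chain' (· ≠ ·))
    (hcase : wordOf l hT r v = wordOf l hT r u ++ [c]) :
    T.Adj (follow l r (M W0 b (wordOf l hT r u))) (follow l r (M W0 b (wordOf l hT r v))) := by
  have hcu := chain'_wordOf l hT r u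
  have hcv := chain'_wordOf l hT r v
  have h1 : wordOf l hT r (follow l r (M W0 b (wordOf l hT r u))) = M W0 b (wordOf l hT r u) :=
    wordOf_follow l hT r (M_chain' hW0 hlast hb hcu)
  have h2 : wordOf l hT r (follow l r (M W0 b (wordOf l hT r v))) = M W0 b (wordOf l hT r v) :=
    wordOf_follow l hT r (M_chain' hW0 hlast hb hcv)
  by_cases hpre : W0 <+: wordOf l hT r u ++ [c]
  · have h3 : M W0 b (wordOf l hT r v) = M W0 b (wordOf l hT r u) ++ [b c] := by
      rw [hcase, M_concat_of_prefix hlast hb hpre]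
    refine (adj_of_word l hT r (c := b c) ?_).1
    rw [h1, h2]
    exact h3
  · have h3 : M W0 b (wordOf l hT r v) = M W0 b (wordOf l hT r u) ++ [c] := by
      rw [hcase, (M_concat_of_not hpre b).1]
    refine (adj_of_word l hT r (c := c) ?_).1
    rw [h1, h2]
    exact h3

lemma gmove_treeAut (hW0 : W0.Chain' (· ≠ ·)) (hlast : W0.getLast? = some i)
    {a : Equiv.Perm (Fin d)} (hai : a i = i) :
    IsTreeAut T (gmove l hT r hW0 hlast hai) := by
  have hmap : ∀ (b : Equiv.Perm (Fin d)), b i = i → ∀ {u v : V}, T.Adj u v →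
      T.Adj (follow l r (M W0 b (wordOf l hT r u))) (follow l r (M W0 b (wordOf l hT r v))) := by
    intro b hb u v h
    rcases word_of_adj l hT r h with hcase | hcase
    · exact adj_follow_M l hT r hlast hb hW0 hcase
    · exact (adj_follow_M l hT r hlast hb hW0 hcase).symm
  intro u v
  constructor
  · intro hadj
    have hinv : a⁻¹ i = i := a.injective (by rw [Equiv.Perm.apply_inv_self, hai])
    have h2 := hmap a⁻¹ hinv hadj
    rwa [show follow l r (M W0 a⁻¹ (wordOf l hT r (gmove l hT r hW0 hlast hai u))) = u from
        M_cancel l hT r hW0 hlast hai u,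
      show follow l r (M W0 a⁻¹ (wordOf l hT r (gmove l hT r hW0 hlast hai v))) = v from
        M_cancel l hT r hW0 hlast hai v] at h2
  · intro h
    exact hmap a hai h

lemma gmove_InU (hW0 : W0.Chain' (· ≠ ·)) (hlast : W0.getLast? = some i)
    {a : Equiv.Perm (Fin d)} (hai : a i = i) (haF : a ∈ F) :
    InU T l F (gmove l hT r hW0 hlast hai) := by
  set g := gmove l hT r hW0 hlast hai with hg
  refine ⟨gmove_treeAut l hT r hW0 hlast hai, fun x => ?_⟩
  by_cases hx : W0 <+: wordOf l hT r x
  · refine ⟨a, haF, fun w hw => ?_⟩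
    rcases word_of_adj l hT r hw with hcase | hcase
    · have hpre : W0 <+: wordOf l hT r x ++ [l.label x w] :=
        hx.trans (List.prefix_append _ _)
      have hww : wordOf l hT r (g w) = wordOf l hT r (g x) ++ [a (l.label x w)] := by
        rw [hg, wordOf_gmove, wordOf_gmove, hcase, M_concat_of_prefix hlast hai hpre]
      exact (adj_of_word l hT r hww).2
    · have hpre : W0 <+: wordOf l hT r w ++ [l.label w x] := hcase ▸ hx
      have hww : wordOf l hT r (g x) = wordOf l hT r (g w) ++ [a (l.label w x)] := by
        rw [hg, wordOf_gmove, wordOf_gmove, hcase, M_concat_of_prefix hlast hai hpre]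
      have h2 := adj_of_word l hT r hww
      rw [l.symm _ _ h2.1.symm, h2.2, l.symm _ _ hw.symm]
  · refine ⟨1, F.one_mem, fun w hw => ?_⟩
    have hgx : g x = x := gmove_fix_not l hT r hW0 hlast hai hx
    have hgw : g w = w := by
      rcases word_of_adj l hT r hw with hcase | hcase
      · by_cases hw0 : W0 <+: wordOf l hT r w
        · rcases prefix_concat_cases (hcase ▸ hw0) with hp | hp
          · exact absurd hp hx
          · apply gmove_fix l hT r hW0 hlast hai
            rw [hcase, ← hp]
        · exact gmove_fix_not l hT r hW0 hlast hai hw0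
      · apply gmove_fix_not l hT r hW0 hlast hai
        intro hp
        exact hx (hcase ▸ (hp.trans (List.prefix_append _ _)))
    rw [hgx, hgw, Equiv.Perm.one_apply]

lemma gmove_ne (hW0 : W0.Chain' (· ≠ ·)) (hlast : W0.getLast? = some i)
    {a : Equiv.Perm (Fin d)} (hai : a i = i) {c : Fin d} (hc : a c ≠ c) :
    gmove l hT r hW0 hlast hai (follow l r (W0 ++ [c])) ≠ follow l r (W0 ++ [c]) := by
  have hci : c ≠ i := fun h => hc (by rw [h, hai])
  have haci : a c ≠ i := fun h => hci (a.injective (by rw [h, hai]))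
  have hch : (W0 ++ [c]).Chain' (· ≠ ·) := by
    refine List.isChain_append.2 ⟨hW0, List.isChain_singleton c, ?_⟩
    intro x hx y hy
    rw [hlast, Option.mem_some_iff] at hx
    rw [List.head?_cons, Option.mem_some_iff] at hy
    subst hx; subst hy
    exact fun h => hci h.symm
  have hch' : (W0 ++ [a c]).Chain' (· ≠ ·) := by
    refine List.isChain_append.2 ⟨hW0, List.isChain_singleton _, ?_⟩
    intro x hx y hy
    rw [hlast, Option.mem_some_iff] at hx
    rw [List.head?_cons, Option.mem_some_iff] at hy
    subst hx; subst hy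
    exact fun h => haci h.symm
  have hword : wordOf l hT r (follow l r (W0 ++ [c])) = W0 ++ [c] :=
    wordOf_follow l hT r hch
  rw [gmove_apply, hword, M_of_prefix (List.prefix_append _ _), List.drop_left]
  intro h
  have := follow_inj l hT r (by simpa using hch') hch h
  have h2 : a c = c := by
    have := List.append_inj_right' this rfl
    simpa using this
  exact hc h2

end GMove

section Alt

/-- Alternating word. -/
def altW (i j : Fin d) : ℕ → List (Fin d)
  | 0 => []
  | k+1 => i :: j :: altW i j k

lemma altW_length (i j : Fin d) (k : ℕ) : (altW i j k).length = 2 * k := by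
  induction k with
  | zero => rfl
  | succ k ih => simp [altW, ih]; omega

lemma altW_chain {i j : Fin d} (hij : i ≠ j) (k : ℕ) :
    (altW i j k ++ [i]).Chain' (· ≠ ·) ∧ (altW i j k ++ [i]).head? = some i := by
  induction k with
  | zero => simp [altW, List.Chain']
  | succ k ih =>
    refine ⟨?_, rfl⟩
    show ((i :: j :: altW i j k) ++ [i]).IsChain (· ≠ ·)
    rw [List.cons_append, List.cons_append, List.isChain_cons_cons, List.isChain_cons]
    refine ⟨hij, ?_, ih.1⟩
    intro y hy
    rw [ih.2, Option.mem_some_iff] at hy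
    subst hy
    exact hij.symm

end Alt
end BMAux

/-- U^{(l)}(F) is discrete iff the action of F on {1,…,d} is free. -/
theorem universal_group_discrete_iff {V : Type*} (T : SimpleGraph V)
    (hT : T.IsTree) (d : ℕ) (hd : 3 ≤ d) (l : LegalLabelling T d)
    (F : Subgroup (Equiv.Perm (Fin d))) :
    (@DiscreteTopology {g : Equiv.Perm V // InU T l F g}
        (TopologicalSpace.induced Subtype.val (permTop V))) ↔
    (∀ a ∈ F, ∀ i : Fin d, a i = i → a = 1) := by
  classical
  letI : TopologicalSpace V := ⊥
  haveI : DiscreteTopology V := ⟨rfl⟩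
  obtain ⟨r⟩ : Nonempty V := hT.isConnected.nonempty
  have h1U : InU T l F 1 := BMAux.InU_one l F
  constructor
  · -- discrete implies free
    intro hdisc a haF i hai
    by_contra hne
    obtain ⟨c, hc⟩ : ∃ c, a c ≠ c := by
      by_contra h
      push_neg at h
      exact hne (Equiv.ext h)
    letI tU : TopologicalSpace {g : Equiv.Perm V // InU T l F g} :=
      TopologicalSpace.induced Subtype.val (permTop V)
    haveI : DiscreteTopology {g : Equiv.Perm V // InU T l F g} := hdisc
    have hopen := isOpen_discrete ({⟨1, h1U⟩} : Set {g : Equiv.Perm V // InU T l F g})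
    obtain ⟨t, ht, hteq⟩ :=
      (@isOpen_induced_iff _ _ (permTop V) _ Subtype.val).1 hopen
    obtain ⟨P, hP, hPeq⟩ :=
      (@isOpen_induced_iff _ _ _ _ (fun g : Equiv.Perm V => (g : V → V))).1 ht
    have h1P : ⇑(1 : Equiv.Perm V) ∈ P := by
      have h1t : (1 : Equiv.Perm V) ∈ t := by
        have : (⟨1, h1U⟩ : {g : Equiv.Perm V // InU T l F g}) ∈ Subtype.val ⁻¹' t := by
          rw [hteq]; rfl
        exact this
      rw [← hPeq] at h1t
      exact h1t
    obtain ⟨I, u, hIu, hIP⟩ := isOpen_pi_iff.1 hP _ h1P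
    set j : Fin d := if i = ⟨0, by omega⟩ then ⟨1, by omega⟩ else ⟨0, by omega⟩ with hj
    have hij : i ≠ j := by
      rcases eq_or_ne i ⟨0, by omega⟩ with h0 | h0
      · rw [hj, if_pos h0, h0]
        simp [Fin.ext_iff]
      · rw [hj, if_neg h0]
        exact h0
    set N := I.sup (fun v => (BMAux.wordOf l hT r v).length) with hN
    have hW0 := (BMAux.altW_chain hij (N+1)).1
    have hlast : (BMAux.altW i j (N+1) ++ [i]).getLast? = some i := List.getLast?_concat
    set g := BMAux.gmove l hT r hW0 hlast hai with hgdef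
    have hgU : InU T l F g := BMAux.gmove_InU l hT r hW0 hlast hai haF
    have hfix : ∀ v ∈ I, g v = v := by
      intro v hv
      apply BMAux.gmove_fix l hT r hW0 hlast hai
      have h1 : (BMAux.wordOf l hT r v).length ≤ N := Finset.le_sup (f := fun v => (BMAux.wordOf l hT r v).length) hv
      have h2 : (BMAux.altW i j (N+1) ++ [i]).length = 2 * (N+1) + 1 := by
        rw [List.length_append, BMAux.altW_length]
        rfl
      omega
    have hmem : ⇑g ∈ (↑I : Set V).pi u := by
      intro v hv
      rw [hfix v hv]
      exact (hIu v hv).2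
    have hgt : g ∈ t := by
      rw [← hPeq]
      exact hIP hmem
    have hg1 : g = 1 := by
      have : (⟨g, hgU⟩ : {g : Equiv.Perm V // InU T l F g}) ∈ ({⟨1, h1U⟩} : Set _) := by
        rw [← hteq]
        exact hgt
      simpa using this
    have := BMAux.gmove_ne l hT r hW0 hlast hai hc
    rw [← hgdef, hg1] at this
    exact this (Equiv.Perm.one_apply _)
  · -- free implies discrete
    intro hfree
    apply (@discreteTopology_iff_isOpen_singleton _
      (TopologicalSpace.induced Subtype.val (permTop V))).2
    rintro ⟨g0, hg0⟩
    set c0 : Fin d := ⟨0, by omega⟩ with hc0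
    set w0 : V := BMAux.nbr l r c0 with hw0
    refine (@isOpen_induced_iff _ _ (permTop V) _ Subtype.val).2
      ⟨{h : Equiv.Perm V | h r = g0 r ∧ h w0 = g0 w0}, ?_, ?_⟩
    · refine (@isOpen_induced_iff _ _ _ _ (fun g : Equiv.Perm V => (g : V → V))).2
        ⟨{f : V → V | f r = g0 r ∧ f w0 = g0 w0}, ?_, rfl⟩
      have : {f : V → V | f r = g0 r ∧ f w0 = g0 w0}
          = (fun f : V → V => f r) ⁻¹' {g0 r} ∩ (fun f : V → V => f w0) ⁻¹' {g0 w0} := rfl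
      rw [this]
      exact ((continuous_apply r).isOpen_preimage _ (isOpen_discrete _)).inter
        ((continuous_apply w0).isOpen_preimage _ (isOpen_discrete _))
    · ext ⟨g, hg⟩
      simp only [Set.mem_preimage, Set.mem_setOf_eq, Set.mem_singleton_iff]
      constructor
      · rintro ⟨h1, h2⟩
        have hInU : InU T l F (g0⁻¹ * g) := BMAux.InU_mul l (BMAux.InU_inv l hg0) hg
        have hr : (g0⁻¹ * g) r = r := by
          rw [Equiv.Perm.mul_apply, h1, Equiv.Perm.inv_apply_self]
        have hw : (g0⁻¹ * g) w0 = w0 := by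
          rw [Equiv.Perm.mul_apply, h2, Equiv.Perm.inv_apply_self]
        have hrigid := BMAux.rigid l hT r hfree hInU hr hw
        have : g = g0 := by
          ext v
          have := hrigid v
          rw [Equiv.Perm.mul_apply] at this
          have h3 : g v = g0 v := by
            have h4 := congrArg g0 this
            rwa [Equiv.Perm.apply_inv_self] at h4
          exact h3
        exact Subtype.ext this
      · intro h
        obtain rfl : g = g0 := congrArg Subtype.val h
        exact ⟨rfl, rfl⟩
end
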